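/- Let M₂, M₄, M₆ be the explicit 14×14 integer matrices of structure constants for the left cell A₁ of W(H₄) given in the paper, and define M₁₄ = 2I − M₂ + M₄ − 6M₆ − 2M₂² + 4M₂M₄ + M₂M₆ − 2M₄² − 6M₄M₆ + M₆M₂ − 2M₆² − 5M₂²M₄ + 3M₂M₄² + M₂M₆². Then M₁₄² = I and the characteristic polynomial of M₁₄ is (u−1)⁷(u+1)⁷. -/

import Mathlib

open Polynomial Matrix

def M2 : Matrix (Fin 14) (Fin 14) ℤ :=
  !![0, 1, 0, 0, 0, 0, 0, 0, 0, 0, 0, 0, 0, 0;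
  1, 0, 1, 0, 0, 0, 0, 0, 0, 0, 0, 0, 0, 0;
  0, 1, 1, 1, 0, 0, 0, 0, 0, 0, 0, 0, 0, 0;
  0, 0, 1, 1, 1, 1, 0, 0, 0, 0, 0, 0, 0, 0;
  0, 0, 0, 1, 0, 0, 1, 0, 0, 0, 0, 0, 0, 0;
  0, 0, 0, 1, 0, 1, 0, 1, 1, 0, 0, 0, 0, 0;
  0, 0, 0, 0, 1, 0, 0, 0, 1, 0, 0, 0, 0, 0;
  0, 0, 0, 0, 0, 1, 0, 0, 0, 1, 0, 0, 0, 0;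
  0, 0, 0, 0, 0, 1, 1, 0, 1, 0, 1, 0, 0, 0;
  0, 0, 0, 0, 0, 0, 0, 1, 0, 0, 1, 0, 0, 0;
  0, 0, 0, 0, 0, 0, 0, 0, 1, 1, 1, 1, 0, 0;
  0, 0, 0, 0, 0, 0, 0, 0, 0, 0, 1, 1, 1, 0;
  0, 0, 0, 0, 0, 0, 0, 0, 0, 0, 0, 1, 0, 1;
  0, 0, 0, 0, 0, 0, 0, 0, 0, 0, 0, 0, 1, 0]
def M4 : Matrix (Fin 14) (Fin 14) ℤ :=
  !![0, 0, 0, 1, 0, 0, 0, 0, 0, 0, 0, 0, 0, 0;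
  0, 0, 1, 1, 1, 1, 0, 0, 0, 0, 0, 0, 0, 0;
  0, 1, 2, 3, 1, 2, 1, 1, 1, 0, 0, 0, 0, 0;
  1, 1, 3, 4, 2, 4, 1, 1, 3, 1, 1, 0, 0, 0;
  0, 1, 1, 2, 0, 2, 1, 1, 1, 0, 1, 0, 0, 0;
  0, 1, 2, 4, 2, 4, 2, 2, 4, 1, 3, 1, 0, 0;
  0, 0, 1, 1, 1, 2, 0, 1, 2, 1, 1, 1, 0, 0;
  0, 0, 1, 1, 1, 2, 1, 0, 2, 1, 1, 1, 0, 0;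
  0, 0, 1, 3, 1, 4, 2, 2, 4, 2, 4, 2, 1, 0;
  0, 0, 0, 1, 0, 1, 1, 1, 2, 0, 2, 1, 1, 0;
  0, 0, 0, 1, 1, 3, 1, 1, 4, 2, 4, 3, 1, 1;
  0, 0, 0, 0, 0, 1, 1, 1, 2, 1, 3, 2, 1, 0;
  0, 0, 0, 0, 0, 0, 0, 0, 1, 1, 1, 1, 0, 0;
  0, 0, 0, 0, 0, 0, 0, 0, 0, 0, 1, 0, 0, 0]
def M6 : Matrix (Fin 14) (Fin 14) ℤ :=
  !![0, 0, 0, 0, 0, 1, 0, 0, 0, 0, 0, 0, 0, 0;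
  0, 0, 0, 1, 0, 1, 1, 0, 1, 0, 0, 0, 0, 0;
  0, 0, 1, 2, 1, 3, 1, 1, 2, 1, 1, 0, 0, 0;
  0, 1, 2, 4, 2, 4, 2, 2, 4, 1, 3, 1, 0, 0;
  0, 0, 1, 2, 1, 2, 0, 1, 2, 1, 1, 1, 0, 0;
  1, 1, 3, 4, 2, 5, 2, 2, 5, 2, 4, 2, 1, 0;
  0, 1, 1, 2, 0, 2, 1, 1, 2, 1, 2, 1, 0, 0;
  0, 0, 1, 2, 1, 2, 1, 1, 2, 0, 2, 1, 1, 0;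
  0, 1, 2, 4, 2, 5, 2, 2, 5, 2, 4, 3, 1, 1;
  0, 0, 1, 1, 1, 2, 1, 0, 2, 1, 2, 1, 0, 0;
  0, 0, 1, 3, 1, 4, 2, 2, 4, 2, 4, 2, 1, 0;
  0, 0, 0, 1, 1, 2, 1, 1, 3, 1, 2, 1, 0, 0;
  0, 0, 0, 0, 0, 1, 0, 1, 1, 0, 1, 0, 0, 0;
  0, 0, 0, 0, 0, 0, 0, 0, 1, 0, 0, 0, 0, 0]

def M14 : Matrix (Fin 14) (Fin 14) ℤ :=
  2 - M2 + M4 - 6 * M6 - 2 * M2 ^ 2 + 4 * M2 * M4 + M2 * M6 - 2 * M4 ^ 2 -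
    6 * M4 * M6 + M6 * M2 - 2 * M6 ^ 2 - 5 * M2 ^ 2 * M4 + 3 * M2 * M4 ^ 2 +
    M2 * M6 ^ 2

def A22 : Matrix (Fin 14) (Fin 14) ℤ :=
  !![1, 0, 1, 0, 0, 0, 0, 0, 0, 0, 0, 0, 0, 0;
    0, 2, 1, 1, 0, 0, 0, 0, 0, 0, 0, 0, 0, 0;
    1, 1, 3, 2, 1, 1, 0, 0, 0, 0, 0, 0, 0, 0;
    0, 1, 2, 4, 1, 2, 1, 1, 1, 0, 0, 0, 0, 0;
    0, 0, 1, 1, 2, 1, 0, 0, 1, 0, 0, 0, 0, 0;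
    0, 0, 1, 2, 1, 4, 1, 1, 2, 1, 1, 0, 0, 0;
    0, 0, 0, 1, 0, 1, 2, 0, 1, 0, 1, 0, 0, 0;
    0, 0, 0, 1, 0, 1, 0, 2, 1, 0, 1, 0, 0, 0;
    0, 0, 0, 1, 1, 2, 1, 1, 4, 1, 2, 1, 0, 0;
    0, 0, 0, 0, 0, 1, 0, 0, 1, 2, 1, 1, 0, 0;
    0, 0, 0, 0, 0, 1, 1, 1, 2, 1, 4, 2, 1, 0;
    0, 0, 0, 0, 0, 0, 0, 0, 1, 1, 2, 3, 1, 1;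
    0, 0, 0, 0, 0, 0, 0, 0, 0, 0, 1, 1, 2, 0;
    0, 0, 0, 0, 0, 0, 0, 0, 0, 0, 0, 1, 0, 1]

def A44 : Matrix (Fin 14) (Fin 14) ℤ :=
  !![1, 1, 3, 4, 2, 4, 1, 1, 3, 1, 1, 0, 0, 0;
    1, 4, 8, 13, 5, 12, 5, 5, 9, 2, 5, 1, 0, 0;
    3, 8, 22, 34, 16, 35, 13, 13, 28, 9, 16, 6, 1, 0;
    4, 13, 34, 60, 26, 63, 26, 26, 55, 18, 38, 16, 5, 1;
    2, 5, 16, 26, 14, 30, 11, 11, 27, 10, 18, 9, 2, 1;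
    4, 12, 35, 63, 30, 76, 31, 31, 72, 27, 55, 28, 9, 3;
    1, 5, 13, 26, 11, 31, 15, 14, 31, 11, 26, 13, 5, 1;
    1, 5, 13, 26, 11, 31, 14, 15, 31, 11, 26, 13, 5, 1;
    3, 9, 28, 55, 27, 72, 31, 31, 76, 30, 63, 35, 12, 4;
    1, 2, 9, 18, 10, 27, 11, 11, 30, 14, 26, 16, 5, 2;
    1, 5, 16, 38, 18, 55, 26, 26, 63, 26, 60, 34, 13, 4;
    0, 1, 6, 16, 9, 28, 13, 13, 35, 16, 34, 22, 8, 3;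
    0, 0, 1, 5, 2, 9, 5, 5, 12, 5, 13, 8, 4, 1;
    0, 0, 0, 1, 1, 3, 1, 1, 4, 2, 4, 3, 1, 1]

def A66 : Matrix (Fin 14) (Fin 14) ℤ :=
  !![1, 1, 3, 4, 2, 5, 2, 2, 5, 2, 4, 2, 1, 0;
    1, 4, 8, 14, 6, 16, 7, 7, 16, 6, 13, 7, 2, 1;
    3, 8, 23, 40, 19, 48, 20, 20, 47, 18, 38, 20, 7, 2;
    4, 14, 40, 76, 35, 91, 39, 39, 90, 34, 72, 38, 13, 4;
    2, 6, 19, 35, 18, 43, 18, 18, 43, 16, 34, 18, 6, 2;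
    5, 16, 48, 91, 43, 114, 48, 48, 112, 43, 90, 47, 16, 5;
    2, 7, 20, 39, 18, 48, 22, 20, 48, 18, 39, 20, 7, 2;
    2, 7, 20, 39, 18, 48, 20, 22, 48, 18, 39, 20, 7, 2;
    5, 16, 47, 90, 43, 112, 48, 48, 114, 43, 91, 48, 16, 5;
    2, 6, 18, 34, 16, 43, 18, 18, 43, 18, 35, 19, 6, 2;
    4, 13, 38, 72, 34, 90, 39, 39, 91, 35, 76, 40, 14, 4;
    2, 7, 20, 38, 18, 47, 20, 20, 48, 19, 40, 23, 8, 3;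
    1, 2, 7, 13, 6, 16, 7, 7, 16, 6, 14, 8, 4, 1;
    0, 1, 2, 4, 2, 5, 2, 2, 5, 2, 4, 3, 1, 1]

def B1 : Matrix (Fin 14) (Fin 14) ℤ :=
  !![0, 0, 4, 4, 4, 4, 0, 0, 0, 0, 0, 0, 0, 0;
    0, 4, 8, 16, 4, 8, 4, 4, 4, 0, 0, 0, 0, 0;
    4, 8, 24, 32, 16, 28, 8, 8, 16, 4, 4, 0, 0, 0;
    4, 16, 32, 52, 20, 48, 20, 20, 36, 8, 20, 4, 0, 0;
    4, 4, 16, 20, 12, 24, 4, 8, 20, 8, 8, 4, 0, 0;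
    4, 8, 28, 48, 24, 56, 24, 20, 52, 20, 36, 16, 4, 0;
    0, 4, 8, 20, 4, 24, 12, 12, 20, 8, 20, 8, 4, 0;
    0, 4, 8, 20, 8, 20, 12, 12, 24, 4, 20, 8, 4, 0;
    0, 4, 16, 36, 20, 52, 20, 24, 56, 24, 48, 28, 8, 4;
    0, 0, 4, 8, 8, 20, 8, 4, 24, 12, 20, 16, 4, 4;
    0, 0, 4, 20, 8, 36, 20, 20, 48, 20, 52, 32, 16, 4;
    0, 0, 0, 4, 4, 16, 8, 8, 28, 16, 32, 24, 8, 4;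
    0, 0, 0, 0, 0, 4, 4, 4, 8, 4, 16, 8, 4, 0;
    0, 0, 0, 0, 0, 0, 0, 0, 4, 4, 4, 4, 0, 0]

def B2 : Matrix (Fin 14) (Fin 14) ℤ :=
  !![0, 0, 0, 1, 0, 1, 1, 0, 1, 0, 0, 0, 0, 0;
    0, 0, 1, 2, 1, 4, 1, 1, 2, 1, 1, 0, 0, 0;
    0, 1, 3, 7, 3, 8, 4, 3, 7, 2, 4, 1, 0, 0;
    1, 2, 7, 12, 6, 14, 5, 6, 13, 5, 9, 4, 1, 0;
    0, 2, 3, 6, 2, 6, 3, 3, 6, 2, 5, 2, 0, 0;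
    1, 3, 8, 14, 7, 16, 7, 7, 16, 5, 13, 7, 3, 1;
    0, 1, 3, 6, 3, 7, 2, 3, 7, 3, 5, 4, 1, 1;
    1, 1, 4, 5, 3, 7, 3, 2, 7, 3, 6, 3, 1, 0;
    1, 3, 7, 13, 5, 16, 7, 7, 16, 7, 14, 8, 3, 1;
    0, 0, 2, 5, 2, 6, 3, 3, 6, 2, 6, 3, 2, 0;
    0, 1, 4, 9, 5, 13, 6, 5, 14, 6, 12, 7, 2, 1;
    0, 0, 1, 4, 2, 7, 3, 4, 8, 3, 7, 3, 1, 0;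
    0, 0, 0, 1, 1, 2, 1, 1, 4, 1, 2, 1, 0, 0;
    0, 0, 0, 0, 0, 1, 0, 1, 1, 0, 1, 0, 0, 0]

def B3 : Matrix (Fin 14) (Fin 14) ℤ :=
  !![0, 6, 12, 24, 12, 24, 12, 12, 24, 6, 18, 6, 0, 0;
    6, 12, 42, 72, 36, 84, 30, 36, 78, 30, 54, 24, 6, 0;
    12, 42, 114, 210, 96, 240, 102, 102, 228, 78, 168, 78, 24, 6;
    24, 72, 210, 378, 180, 456, 186, 186, 432, 162, 330, 168, 54, 18;
    12, 36, 96, 180, 78, 210, 96, 90, 204, 72, 162, 78, 30, 6;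
    24, 84, 240, 456, 210, 546, 234, 234, 540, 204, 432, 228, 78, 24;
    12, 30, 102, 186, 96, 234, 96, 96, 234, 90, 186, 102, 36, 12;
    12, 36, 102, 186, 90, 234, 96, 96, 234, 96, 186, 102, 30, 12;
    24, 78, 228, 432, 204, 540, 234, 234, 546, 210, 456, 240, 84, 24;
    6, 30, 78, 162, 72, 204, 90, 96, 210, 78, 180, 96, 36, 12;
    18, 54, 168, 330, 162, 432, 186, 186, 456, 180, 378, 210, 72, 24;
    6, 24, 78, 168, 78, 228, 102, 102, 240, 96, 210, 114, 42, 12;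
    0, 6, 24, 54, 30, 78, 36, 30, 84, 36, 72, 42, 12, 6;
    0, 0, 6, 18, 6, 24, 12, 12, 24, 12, 24, 12, 6, 0]

def B4 : Matrix (Fin 14) (Fin 14) ℤ :=
  !![0, 0, 0, 1, 0, 1, 0, 1, 1, 0, 0, 0, 0, 0;
    0, 0, 1, 2, 2, 3, 1, 1, 3, 0, 1, 0, 0, 0;
    0, 1, 3, 7, 3, 8, 3, 4, 7, 2, 4, 1, 0, 0;
    1, 2, 7, 12, 6, 14, 6, 5, 13, 5, 9, 4, 1, 0;
    0, 1, 3, 6, 2, 7, 3, 3, 5, 2, 5, 2, 1, 0;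
    1, 4, 8, 14, 6, 16, 7, 7, 16, 6, 13, 7, 2, 1;
    1, 1, 4, 5, 3, 7, 2, 3, 7, 3, 6, 3, 1, 0;
    0, 1, 3, 6, 3, 7, 3, 2, 7, 3, 5, 4, 1, 1;
    1, 2, 7, 13, 6, 16, 7, 7, 16, 6, 14, 8, 4, 1;
    0, 1, 2, 5, 2, 5, 3, 3, 7, 2, 6, 3, 1, 0;
    0, 1, 4, 9, 5, 13, 5, 6, 14, 6, 12, 7, 2, 1;
    0, 0, 1, 4, 2, 7, 4, 3, 8, 3, 7, 3, 1, 0;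
    0, 0, 0, 1, 0, 3, 1, 1, 3, 2, 2, 1, 0, 0;
    0, 0, 0, 0, 0, 1, 1, 0, 1, 0, 1, 0, 0, 0]

def B5 : Matrix (Fin 14) (Fin 14) ℤ :=
  !![0, 5, 10, 20, 5, 10, 5, 5, 5, 0, 0, 0, 0, 0;
    5, 10, 35, 45, 25, 40, 10, 10, 20, 5, 5, 0, 0, 0;
    10, 35, 80, 125, 50, 105, 40, 40, 70, 15, 30, 5, 0, 0;
    20, 45, 125, 190, 90, 195, 70, 70, 155, 50, 85, 30, 5, 0;
    5, 25, 50, 90, 30, 90, 40, 40, 70, 20, 50, 15, 5, 0;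
    10, 40, 105, 195, 90, 220, 95, 95, 210, 70, 155, 70, 20, 5;
    5, 10, 40, 70, 40, 95, 30, 40, 95, 40, 70, 40, 10, 5;
    5, 10, 40, 70, 40, 95, 40, 30, 95, 40, 70, 40, 10, 5;
    5, 20, 70, 155, 70, 210, 95, 95, 220, 90, 195, 105, 40, 10;
    0, 5, 15, 50, 20, 70, 40, 40, 90, 30, 90, 50, 25, 5;
    0, 5, 30, 85, 50, 155, 70, 70, 195, 90, 190, 125, 45, 20;
    0, 0, 5, 30, 15, 70, 40, 40, 105, 50, 125, 80, 35, 10;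
    0, 0, 0, 5, 5, 20, 10, 10, 40, 25, 45, 35, 10, 5;
    0, 0, 0, 0, 0, 5, 5, 5, 10, 5, 20, 10, 5, 0]

def B6 : Matrix (Fin 14) (Fin 14) ℤ :=
  !![3, 12, 24, 39, 15, 36, 15, 15, 27, 6, 15, 3, 0, 0;
    12, 27, 75, 114, 54, 117, 42, 42, 93, 30, 51, 18, 3, 0;
    24, 75, 192, 321, 141, 330, 132, 132, 276, 87, 177, 69, 18, 3;
    39, 114, 321, 549, 258, 612, 243, 243, 546, 192, 381, 177, 51, 15;
    15, 54, 141, 258, 111, 282, 123, 120, 258, 87, 192, 87, 30, 6;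
    36, 117, 330, 612, 282, 726, 306, 309, 702, 258, 546, 276, 93, 27;
    15, 42, 132, 243, 123, 306, 126, 126, 309, 120, 243, 132, 42, 15;
    15, 42, 132, 243, 120, 309, 126, 126, 306, 123, 243, 132, 42, 15;
    27, 93, 276, 546, 258, 702, 309, 306, 726, 282, 612, 330, 117, 36;
    6, 30, 87, 192, 87, 258, 120, 123, 282, 111, 258, 141, 54, 15;
    15, 51, 177, 381, 192, 546, 243, 243, 612, 258, 549, 321, 114, 39;
    3, 18, 69, 177, 87, 276, 132, 132, 330, 141, 321, 192, 75, 24;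
    0, 3, 18, 51, 30, 93, 42, 42, 117, 54, 114, 75, 27, 12;
    0, 0, 3, 15, 6, 27, 15, 15, 36, 15, 39, 24, 12, 3]

def B7 : Matrix (Fin 14) (Fin 14) ℤ :=
  !![1, 4, 8, 14, 6, 16, 7, 7, 16, 6, 13, 7, 2, 1;
    4, 9, 26, 44, 21, 53, 22, 22, 52, 20, 42, 22, 8, 2;
    8, 26, 71, 130, 60, 155, 66, 66, 153, 58, 123, 65, 22, 7;
    14, 44, 130, 242, 115, 296, 125, 125, 292, 111, 234, 123, 42, 13;
    6, 21, 60, 115, 53, 139, 61, 59, 138, 52, 111, 58, 20, 6;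
    16, 53, 155, 296, 139, 365, 155, 157, 364, 138, 292, 153, 52, 16;
    7, 22, 66, 125, 61, 155, 66, 66, 157, 59, 125, 66, 22, 7;
    7, 22, 66, 125, 59, 157, 66, 66, 155, 61, 125, 66, 22, 7;
    16, 52, 153, 292, 138, 364, 157, 155, 365, 139, 296, 155, 53, 16;
    6, 20, 58, 111, 52, 138, 59, 61, 139, 53, 115, 60, 21, 6;
    13, 42, 123, 234, 111, 292, 125, 125, 296, 115, 242, 130, 44, 14;
    7, 22, 65, 123, 58, 153, 66, 66, 155, 60, 130, 71, 26, 8;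
    2, 8, 22, 42, 20, 52, 22, 22, 53, 21, 44, 26, 9, 4;
    1, 2, 7, 13, 6, 16, 7, 7, 16, 6, 14, 8, 4, 1]

def Eaux : Matrix (Fin 14) (Fin 14) ℤ :=
  !![0, 0, 0, 0, 0, 0, 0, 0, 0, 0, 0, 0, 0, 1;
    0, 0, 0, 0, 0, 0, 0, 0, 0, 0, 0, 0, 1, 0;
    0, 0, 0, 0, 0, 0, 0, 0, 0, 0, 0, 1, 0, 0;
    0, 0, 0, 0, 0, 0, 0, 0, 0, 0, 1, 0, 0, 0;
    0, 0, 0, 0, 0, 0, 0, 0, 0, 1, 0, 0, 0, 0;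
    0, 0, 0, 0, 0, 0, 0, 0, 1, 0, 0, 0, 0, 0;
    0, 0, 0, 0, 0, 0, 0, 1, 0, 0, 0, 0, 0, 0;
    0, 0, 0, 0, 0, 0, 1, 0, 0, 0, 0, 0, 0, 0;
    0, 0, 0, 0, 0, 1, 0, 0, 0, 0, 0, 0, 0, 0;
    0, 0, 0, 0, 1, 0, 0, 0, 0, 0, 0, 0, 0, 0;
    0, 0, 0, 1, 0, 0, 0, 0, 0, 0, 0, 0, 0, 0;
    0, 0, 1, 0, 0, 0, 0, 0, 0, 0, 0, 0, 0, 0;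
    0, 1, 0, 0, 0, 0, 0, 0, 0, 0, 0, 0, 0, 0;
    1, 0, 0, 0, 0, 0, 0, 0, 0, 0, 0, 0, 0, 0]

def Pint : Matrix (Fin 14) (Fin 14) ℤ :=
  !![1, 0, 0, 0, 0, 0, 0, 1, 0, 0, 0, 0, 0, 0;
    0, 1, 0, 0, 0, 0, 0, 0, 1, 0, 0, 0, 0, 0;
    0, 0, 1, 0, 0, 0, 0, 0, 0, 1, 0, 0, 0, 0;
    0, 0, 0, 1, 0, 0, 0, 0, 0, 0, 1, 0, 0, 0;
    0, 0, 0, 0, 1, 0, 0, 0, 0, 0, 0, 1, 0, 0;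
    0, 0, 0, 0, 0, 1, 0, 0, 0, 0, 0, 0, 1, 0;
    0, 0, 0, 0, 0, 0, 1, 0, 0, 0, 0, 0, 0, 1;
    0, 0, 0, 0, 0, 0, 1, 0, 0, 0, 0, 0, 0, -1;
    0, 0, 0, 0, 0, 1, 0, 0, 0, 0, 0, 0, -1, 0;
    0, 0, 0, 0, 1, 0, 0, 0, 0, 0, 0, -1, 0, 0;
    0, 0, 0, 1, 0, 0, 0, 0, 0, 0, -1, 0, 0, 0;
    0, 0, 1, 0, 0, 0, 0, 0, 0, -1, 0, 0, 0, 0;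
    0, 1, 0, 0, 0, 0, 0, 0, -1, 0, 0, 0, 0, 0;
    1, 0, 0, 0, 0, 0, 0, -1, 0, 0, 0, 0, 0, 0]

def Qint : Matrix (Fin 14) (Fin 14) ℤ :=
  !![1, 0, 0, 0, 0, 0, 0, 0, 0, 0, 0, 0, 0, 1;
    0, 1, 0, 0, 0, 0, 0, 0, 0, 0, 0, 0, 1, 0;
    0, 0, 1, 0, 0, 0, 0, 0, 0, 0, 0, 1, 0, 0;
    0, 0, 0, 1, 0, 0, 0, 0, 0, 0, 1, 0, 0, 0;
    0, 0, 0, 0, 1, 0, 0, 0, 0, 1, 0, 0, 0, 0;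
    0, 0, 0, 0, 0, 1, 0, 0, 1, 0, 0, 0, 0, 0;
    0, 0, 0, 0, 0, 0, 1, 1, 0, 0, 0, 0, 0, 0;
    1, 0, 0, 0, 0, 0, 0, 0, 0, 0, 0, 0, 0, -1;
    0, 1, 0, 0, 0, 0, 0, 0, 0, 0, 0, 0, -1, 0;
    0, 0, 1, 0, 0, 0, 0, 0, 0, 0, 0, -1, 0, 0;
    0, 0, 0, 1, 0, 0, 0, 0, 0, 0, -1, 0, 0, 0;
    0, 0, 0, 0, 1, 0, 0, 0, 0, -1, 0, 0, 0, 0;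
    0, 0, 0, 0, 0, 1, 0, 0, -1, 0, 0, 0, 0, 0;
    0, 0, 0, 0, 0, 0, 1, -1, 0, 0, 0, 0, 0, 0]

def Dint : Matrix (Fin 14) (Fin 14) ℤ :=
  !![1, 0, 0, 0, 0, 0, 0, 0, 0, 0, 0, 0, 0, 0;
    0, 1, 0, 0, 0, 0, 0, 0, 0, 0, 0, 0, 0, 0;
    0, 0, 1, 0, 0, 0, 0, 0, 0, 0, 0, 0, 0, 0;
    0, 0, 0, 1, 0, 0, 0, 0, 0, 0, 0, 0, 0, 0;
    0, 0, 0, 0, 1, 0, 0, 0, 0, 0, 0, 0, 0, 0;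
    0, 0, 0, 0, 0, 1, 0, 0, 0, 0, 0, 0, 0, 0;
    0, 0, 0, 0, 0, 0, 1, 0, 0, 0, 0, 0, 0, 0;
    0, 0, 0, 0, 0, 0, 0, -1, 0, 0, 0, 0, 0, 0;
    0, 0, 0, 0, 0, 0, 0, 0, -1, 0, 0, 0, 0, 0;
    0, 0, 0, 0, 0, 0, 0, 0, 0, -1, 0, 0, 0, 0;
    0, 0, 0, 0, 0, 0, 0, 0, 0, 0, -1, 0, 0, 0;
    0, 0, 0, 0, 0, 0, 0, 0, 0, 0, 0, -1, 0, 0;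
    0, 0, 0, 0, 0, 0, 0, 0, 0, 0, 0, 0, -1, 0;
    0, 0, 0, 0, 0, 0, 0, 0, 0, 0, 0, 0, 0, -1]

set_option maxRecDepth 40000 in
lemma hPQ2 : Pint * Qint = (2 : ℤ) • 1 := by decide

set_option maxRecDepth 40000 in
lemma hQP2 : Qint * Pint = (2 : ℤ) • 1 := by decide

set_option maxRecDepth 40000 in
lemma hEP : Eaux * Pint = Pint * Dint := by decide

set_option maxRecDepth 40000 in
lemma hEsq : Eaux * Eaux = 1 := by decide

lemma hDtri : Dint.BlockTriangular id := by
  show ∀ i j : Fin 14, j < i → (Dint i j : ℤ) = 0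
  intro i j h; fin_cases i <;> fin_cases j <;> simp_all [Dint]

lemma charpoly_Dint : Dint.charpoly = (X - 1) ^ 7 * (X + 1) ^ 7 := by
  rw [Matrix.charpoly_of_upperTriangular Dint hDtri]
  have h : ∀ i : Fin 14, Dint i i = if (i : ℕ) < 7 then 1 else -1 := by decide
  simp only [h]
  rw [Fin.prod_univ_succ, Fin.prod_univ_succ, Fin.prod_univ_succ, Fin.prod_univ_succ,
    Fin.prod_univ_succ, Fin.prod_univ_succ, Fin.prod_univ_succ, Fin.prod_univ_succ,
    Fin.prod_univ_succ, Fin.prod_univ_succ, Fin.prod_univ_succ, Fin.prod_univ_succ,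
    Fin.prod_univ_succ, Fin.prod_univ_one]
  norm_num
  ring


lemma charpoly_conj_aux {n : Type*} [Fintype n] [DecidableEq n] {K : Type*} [CommRing K]
    [IsDomain K] (A P Q D : Matrix n n K) (c : K) (hc : c ≠ 0)
    (hPQ : P * Q = c • 1) (hQP : Q * P = c • 1) (hAP : A * P = P * D) :
    A.charpoly = D.charpoly := by
  set f : Matrix n n K →+* Matrix n n K[X] := (Polynomial.C : K →+* K[X]).mapMatrix with hf
  have hsm : ∀ M : Matrix n n K, f (c • M) = (C c) • f M := by
    intro M; ext i j
    simp [hf, Algebra.algebraMap_self, smul_eq_mul]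
  have hQAP : Q * A * P = c • D := by
    rw [mul_assoc, hAP, ← mul_assoc, hQP, smul_mul_assoc, one_mul]
  have hchar : ∀ M : Matrix n n K, charmatrix M = (X : K[X]) • 1 - f M := by
    intro M
    rw [charmatrix, Matrix.scalar_apply, Matrix.smul_one_eq_diagonal, hf]
  have key : f Q * charmatrix A * f P = (C c) • charmatrix D := by
    rw [hchar, hchar, Matrix.mul_sub, Matrix.sub_mul, smul_sub]
    congr 1
    · rw [mul_smul_comm, mul_one, smul_mul_assoc, ← _root_.map_mul f, hQP, hsm, f.map_one,
        smul_comm]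
    · rw [← _root_.map_mul f, ← _root_.map_mul f, hQAP, hsm]
  have hdet := congrArg Matrix.det key
  rw [Matrix.det_mul, Matrix.det_mul, Matrix.det_smul, ← Matrix.charpoly, ← Matrix.charpoly]
    at hdet
  have hdets : f Q * f P = (C c) • 1 := by
    rw [← _root_.map_mul f, hQP, hsm, f.map_one]
  have h2 : (f Q).det * (f P).det = (C c) ^ Fintype.card n := by
    rw [← Matrix.det_mul, hdets, Matrix.det_smul, Matrix.det_one, mul_one]
  have h3 : (C c) ^ Fintype.card n * A.charpoly = (C c) ^ Fintype.card n * D.charpoly := by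
    calc (C c) ^ Fintype.card n * A.charpoly = (f Q).det * A.charpoly * (f P).det := by
          rw [mul_comm ((f Q).det) _, mul_assoc, h2]; ring
    _ = (C c) ^ Fintype.card n * D.charpoly := hdet
  exact mul_left_cancel₀ (pow_ne_zero _ (Polynomial.C_ne_zero.mpr hc)) h3


set_option maxRecDepth 40000 in
lemma hA22 : M2 ^ 2 = A22 := by decide

set_option maxRecDepth 40000 in
lemma hA44 : M4 ^ 2 = A44 := by decide

set_option maxRecDepth 40000 in
lemma hA66 : M6 ^ 2 = A66 := by decide

set_option maxRecDepth 40000 in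
lemma hB1 : 4 * M2 * M4 = B1 := by decide

set_option maxRecDepth 40000 in
lemma hB2 : M2 * M6 = B2 := by decide

set_option maxRecDepth 40000 in
lemma hB3 : 6 * M4 * M6 = B3 := by decide

set_option maxRecDepth 40000 in
lemma hB4 : M6 * M2 = B4 := by decide

set_option maxRecDepth 40000 in
lemma hB5 : 5 * A22 * M4 = B5 := by decide

set_option maxRecDepth 40000 in
lemma hB6 : 3 * M2 * A44 = B6 := by decide

set_option maxRecDepth 40000 in
lemma hB7 : M2 * A66 = B7 := by decide

set_option maxRecDepth 40000 in
set_option maxHeartbeats 2000000 in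
lemma M14_eq : M14 = Eaux := by
  unfold M14
  rw [hA22, hA44, hA66, hB1, hB2, hB3, hB4, hB5, hB6, hB7]
  decide

lemma charpoly_Eaux : Eaux.charpoly = (X - 1) ^ 7 * (X + 1) ^ 7 := by
  rw [charpoly_conj_aux Eaux Pint Qint Dint 2 two_ne_zero hPQ2 hQP2 hEP, charpoly_Dint]

/-- M₁₄ squares to the identity and has characteristic polynomial (u−1)⁷(u+1)⁷. -/
theorem stmt6 :
    M14 ^ 2 = 1 ∧ M14.charpoly = (X - 1) ^ 7 * (X + 1) ^ 7 := by
  refine ⟨?_, ?_⟩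
  · rw [pow_two, M14_eq, hEsq]
  · rw [M14_eq, charpoly_Eaux]
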